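/- Let G₁ and G₂ be groups, h ∈ G₁ with h ≠ 1, and k ∈ G₂ with k ≠ 1. Let Γ = G₁ ∗ G₂ be the free product, set w := inl(h) · inr(k) ∈ Γ, and in ℓ²(Γ;ℂ) let η := (δ₁ + δ_w)/‖δ₁ + δ_w‖. Then for every g ∈ G₁, ⟨η, λ(inl g)η⟩ equals 1 if g = 1 and 0 otherwise, and for every g ∈ G₂, ⟨η, λ(inr g)η⟩ equals 1 if g = 1 and 0 otherwise. -/

import Mathlib

open Monoid
open scoped ENNReal InnerProductSpace

noncomputable section

private theorem translMem {X : Type*} (e : X ≃ X) (f : lp (fun _ : X => ℂ) 2) :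
    Memℓp (fun x => f (e x)) 2 := by
  apply memℓp_gen
  exact (Equiv.summable_iff e (f := fun i => ‖f i‖ ^ (2 : ℝ≥0∞).toReal)).2
    ((lp.memℓp f).summable (by norm_num))

/-- The linear isometry equivalence `f ↦ f ∘ e` of `ℓ²(X;ℂ)` induced by a bijection
`e` of `X`. -/
def translIso {X : Type*} (e : X ≃ X) :
    lp (fun _ : X => ℂ) 2 ≃ₗᵢ[ℂ] lp (fun _ : X => ℂ) 2 where
  toFun f := ⟨fun x => f (e x), translMem e f⟩
  invFun f := ⟨fun x => f (e.symm x), translMem e.symm f⟩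
  map_add' f g := by ext x; simp [lp.coeFn_add]; rfl
  map_smul' c f := by ext x; simp [lp.coeFn_smul]
  left_inv f := by ext x; simp
  right_inv f := by ext x; simp
  norm_map' f := by
    rw [lp.norm_eq_tsum_rpow (by norm_num), lp.norm_eq_tsum_rpow (by norm_num)]
    congr 1
    exact e.tsum_eq (f := fun x => ‖f x‖ ^ (2 : ℝ≥0∞).toReal)

/-- The left translation `λ(g)` on `ℓ²(Γ;ℂ)`, the unitary given by
`(λ(g) f)(x) = f (g⁻¹ * x)`. -/
def leftTransl {Γ : Type*} [Group Γ] (g : Γ) :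
    lp (fun _ : Γ => ℂ) 2 ≃ₗᵢ[ℂ] lp (fun _ : Γ => ℂ) 2 :=
  translIso (Equiv.mulLeft g⁻¹)


private theorem leftTransl_single {Γ : Type*} [Group Γ] [DecidableEq Γ] (g x : Γ) :
    leftTransl g (lp.single 2 x (1 : ℂ)) = lp.single 2 (g * x) (1 : ℂ) := by
  ext y
  have hL : ((leftTransl g) (lp.single 2 x (1 : ℂ)) : ∀ _ : Γ, ℂ) y
      = (lp.single 2 x (1 : ℂ) : lp (fun _ : Γ => ℂ) 2) (g⁻¹ * y) := rfl
  rw [hL]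
  simp only [lp.single_apply, eq_rec_constant, dite_eq_ite]
  by_cases hy : y = g * x
  · rw [Pi.single_apply, Pi.single_apply, if_pos (by rw [hy]; group), if_pos hy]
  · rw [Pi.single_apply, Pi.single_apply, if_neg (fun hc => hy (by rw [← mul_inv_cancel_left g y, hc])), if_neg hy]

private theorem inner_single_single {Γ : Type*} [DecidableEq Γ] (x y : Γ) :
    ⟪(lp.single 2 x (1 : ℂ) : lp (fun _ : Γ => ℂ) 2), lp.single 2 y (1 : ℂ)⟫_ℂ = if x = y then 1 else 0 := by
  rw [lp.inner_single_left, lp.single_apply]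
  by_cases hxy : x = y
  · rw [Pi.single_apply, if_pos hxy]; simp
  · rw [Pi.single_apply, if_neg hxy]; simp

private theorem main_calc {Γ : Type*} [Group Γ] [DecidableEq Γ] (w g : Γ)
    (hw : w ≠ 1) (h1 : g ≠ w) (h2 : g * w ≠ 1) :
    ⟪(‖(lp.single 2 (1 : Γ) (1 : ℂ) : lp (fun _ : Γ => ℂ) 2) + lp.single 2 w (1 : ℂ)‖⁻¹ : ℝ) •
        ((lp.single 2 (1 : Γ) (1 : ℂ) : lp (fun _ : Γ => ℂ) 2) + lp.single 2 w (1 : ℂ)),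
      leftTransl g ((‖(lp.single 2 (1 : Γ) (1 : ℂ) : lp (fun _ : Γ => ℂ) 2) + lp.single 2 w (1 : ℂ)‖⁻¹ : ℝ) •
        ((lp.single 2 (1 : Γ) (1 : ℂ) : lp (fun _ : Γ => ℂ) 2) + lp.single 2 w (1 : ℂ)))⟫_ℂ
      = if g = 1 then 1 else 0 := by
  set v : lp (fun _ : Γ => ℂ) 2 := (lp.single 2 (1 : Γ) (1 : ℂ) : lp (fun _ : Γ => ℂ) 2) + lp.single 2 w (1 : ℂ) with hv
  have hTv : leftTransl g v = lp.single 2 g (1 : ℂ) + lp.single 2 (g * w) (1 : ℂ) := by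
    rw [hv, map_add, leftTransl_single, leftTransl_single, mul_one]
  have hvv : ⟪v, v⟫_ℂ = 2 := by
    rw [hv, inner_add_left, inner_add_right, inner_add_right,
      inner_single_single, inner_single_single, inner_single_single, inner_single_single,
      if_pos rfl, if_pos rfl, if_neg hw, if_neg (Ne.symm hw)]
    ring
  have hnormR : ‖v‖ ^ 2 = (2 : ℝ) := by
    rw [← inner_self_eq_norm_sq (𝕜 := ℂ), hvv]
    norm_num
  have hnR : ‖v‖ ≠ 0 := by
    intro hc
    rw [hc] at hnormR
    norm_num at hnormR
  have hS : ⟪v, leftTransl g v⟫_ℂ = if g = 1 then 2 else 0 := by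
    rw [hTv, hv, inner_add_left, inner_add_right, inner_add_right,
      inner_single_single, inner_single_single, inner_single_single, inner_single_single,
      if_neg (fun hc : (1 : Γ) = g * w => h2 hc.symm), if_neg (Ne.symm h1)]
    by_cases hg : g = 1
    · rw [if_pos (Eq.symm hg), if_pos (by rw [hg, one_mul]), if_pos hg]; ring
    · rw [if_neg (fun hc : (1 : Γ) = g => hg hc.symm),
        if_neg (fun hc : w = g * w => hg (right_eq_mul.mp hc)), if_neg hg]
      ring
  rw [RCLike.real_smul_eq_coe_smul (K := ℂ), map_smul, inner_smul_left, inner_smul_right, hS]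
  by_cases hg : g = 1
  · rw [if_pos hg, if_pos hg]
    have hc : (‖v‖ : ℂ) ≠ 0 := Complex.ofReal_ne_zero.mpr hnR
    have hnormC : ((‖v‖ : ℂ)) * (‖v‖ : ℂ) = 2 := by
      rw [← Complex.ofReal_mul, ← pow_two, hnormR]
      norm_num
    simp only [map_inv₀, RCLike.conj_ofReal, Complex.conj_ofReal, Complex.coe_algebraMap]
    rw [← hnormC, inv_mul_cancel_left₀ hc, inv_mul_cancel₀ hc]
  · rw [if_neg hg, if_neg hg]
    simp

/-- Example 3.5: the state `ω = ⟪η, ·η⟫` restricts to the canonical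
trace states on the two factors. Let `h ≠ 1` in `G₁`, `k ≠ 1` in `G₂`,
`Γ = G₁ ∗ G₂`, `w = inl h * inr k`, and `η = (δ₁ + δ_w)/‖δ₁ + δ_w‖` in `ℓ²(Γ;ℂ)`.
Then for `g ∈ G₁`, `⟪η, λ(inl g) η⟫` is `1` if `g = 1` and `0` otherwise, and likewise
for `g ∈ G₂` with `inr`. -/
theorem free_joinings_stmt16
    {G₁ G₂ : Type*} [Group G₁] [Group G₂] [DecidableEq G₁] [DecidableEq G₂]
    [DecidableEq (Coprod G₁ G₂)]
    (h : G₁) (hh : h ≠ 1) (k : G₂) (hk : k ≠ 1) :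
    let Γ := Coprod G₁ G₂
    let w : Γ := Coprod.inl h * Coprod.inr k
    let δ₁ : lp (fun _ : Γ => ℂ) 2 := lp.single 2 (1 : Γ) (1 : ℂ)
    let δw : lp (fun _ : Γ => ℂ) 2 := lp.single 2 w (1 : ℂ)
    let η : lp (fun _ : Γ => ℂ) 2 := ‖δ₁ + δw‖⁻¹ • (δ₁ + δw)
    (∀ g : G₁, ⟪η, leftTransl (Coprod.inl g : Γ) η⟫_ℂ = if g = 1 then 1 else 0) ∧
    (∀ g : G₂, ⟪η, leftTransl (Coprod.inr g : Γ) η⟫_ℂ = if g = 1 then 1 else 0) := by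
  intro Γ w δ₁ δw η
  simp only [Γ, w, δ₁, δw, η]
  have hw : Coprod.inl h * Coprod.inr k ≠ (1 : Coprod G₁ G₂) := by
    intro hc
    have := congrArg (Coprod.snd (M := G₁) (N := G₂)) hc
    simp at this
    exact hk this
  constructor
  · intro g
    refine (main_calc _ (Coprod.inl g) hw ?_ ?_).trans ?_
    · intro hc
      have := congrArg (Coprod.snd (M := G₁) (N := G₂)) hc
      simp at this
      exact hk this.symm
    · intro hc
      have := congrArg (Coprod.snd (M := G₁) (N := G₂)) hc
      simp at this
      exact hk this
    · simp [Coprod.inl_injective.eq_iff' (map_one Coprod.inl)]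
  · intro g
    refine (main_calc _ (Coprod.inr g) hw ?_ ?_).trans ?_
    · intro hc
      have := congrArg (Coprod.fst (M := G₁) (N := G₂)) hc
      simp at this
      exact hh this.symm
    · intro hc
      have := congrArg (Coprod.fst (M := G₁) (N := G₂)) hc
      simp at this
      exact hh this
    · simp [Coprod.inr_injective.eq_iff' (map_one Coprod.inr)]

end
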